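/- For every real number c, the trace of the product of matrix exponentials satisfies tr( exp(c·τ₁) · exp(c·τ₂) · exp(c·τ₃) ) = 2·cos³(c/2) − 2·sin³(c/2). (In particular this conjugation-invariant function on the isotropic configuration space is not symmetric under c → −c, exhibiting a gauge-invariant function not captured by spin networks with a single edge.) -/

import Mathlib

/- STATEMENT 18: tr(exp(c·τ₁)·exp(c·τ₂)·exp(c·τ₃)) = 2·cos³(c/2) − 2·sin³(c/2)
for every real c. -/

attribute [local instance] Matrix.linftyOpNormedAddCommGroup Matrix.linftyOpNormedRing
  Matrix.linftyOpNormedAlgebra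

/-- The Pauli matrices σ₁, σ₂, σ₃ (indexed by `Fin 3`). -/
noncomputable def σ : Fin 3 → Matrix (Fin 2) (Fin 2) ℂ :=
  ![!![0, 1; 1, 0], !![0, -Complex.I; Complex.I, 0], !![1, 0; 0, -1]]

/-- The su(2) generators τ_i = −(i/2)·σ_i. -/
noncomputable def τ (i : Fin 3) : Matrix (Fin 2) (Fin 2) ℂ :=
  (-(Complex.I / 2)) • σ i

noncomputable def P1 : Matrix (Fin 2) (Fin 2) ℂ := !![1, 1; 1, -1]
noncomputable def Q1 : Matrix (Fin 2) (Fin 2) ℂ := !![1/2, 1/2; 1/2, -(1/2)]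
noncomputable def P2 : Matrix (Fin 2) (Fin 2) ℂ := !![1, 1; Complex.I, -Complex.I]
noncomputable def Q2 : Matrix (Fin 2) (Fin 2) ℂ := !![1/2, -Complex.I/2; 1/2, Complex.I/2]

lemma diag_eq (x y : ℂ) : Matrix.diagonal ![x, y] = !![x, 0; 0, y] := by
  ext i j
  fin_cases i <;> fin_cases j <;> simp [Matrix.diagonal]

lemma exp_two (P Q : Matrix (Fin 2) (Fin 2) ℂ) (h1 : P * Q = 1) (h2 : Q * P = 1) (x y : ℂ) :
    NormedSpace.exp (P * !![x, 0; 0, y] * Q)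
      = P * !![Complex.exp x, 0; 0, Complex.exp y] * Q := by
  set U : (Matrix (Fin 2) (Fin 2) ℂ)ˣ := ⟨P, Q, h1, h2⟩ with hU
  have hP : P = (U : Matrix (Fin 2) (Fin 2) ℂ) := rfl
  have hQ : Q = ((U⁻¹ : (Matrix (Fin 2) (Fin 2) ℂ)ˣ) : Matrix (Fin 2) (Fin 2) ℂ) := rfl
  rw [← diag_eq, ← diag_eq, hP, hQ, Matrix.exp_units_conj, Matrix.exp_diagonal]
  have hv : NormedSpace.exp (![x, y]) = ![Complex.exp x, Complex.exp y] := by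
    funext i
    rw [show NormedSpace.exp (![x, y]) i = NormedSpace.exp (![x, y] i) from
      Pi.coe_exp _ i, Complex.exp_eq_exp_ℂ]
    fin_cases i <;> rfl
  rw [hv]

lemma P1Q1 : P1 * Q1 = (1 : Matrix (Fin 2) (Fin 2) ℂ) := by
  ext i j
  fin_cases i <;> fin_cases j <;>
    simp [P1, Q1, Matrix.mul_apply, Fin.sum_univ_succ, Matrix.one_apply] <;> norm_num

lemma Q1P1 : Q1 * P1 = (1 : Matrix (Fin 2) (Fin 2) ℂ) := by
  ext i j
  fin_cases i <;> fin_cases j <;>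
    simp [P1, Q1, Matrix.mul_apply, Fin.sum_univ_succ, Matrix.one_apply] <;> norm_num

lemma P2Q2 : P2 * Q2 = (1 : Matrix (Fin 2) (Fin 2) ℂ) := by
  ext i j
  fin_cases i <;> fin_cases j <;>
    simp [P2, Q2, Matrix.mul_apply, Fin.sum_univ_succ, Matrix.one_apply,
      Complex.ext_iff] <;> norm_num

lemma Q2P2 : Q2 * P2 = (1 : Matrix (Fin 2) (Fin 2) ℂ) := by
  ext i j
  fin_cases i <;> fin_cases j <;>
    simp [P2, Q2, Matrix.mul_apply, Fin.sum_univ_succ, Matrix.one_apply,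
      Complex.ext_iff] <;> norm_num

theorem trace_of_isotropic_holonomy_product (c : ℝ) :
    (NormedSpace.exp ((c : ℂ) • τ 0) * NormedSpace.exp ((c : ℂ) • τ 1) *
        NormedSpace.exp ((c : ℂ) • τ 2)).trace
      = 2 * ((Real.cos (c / 2) : ℝ) : ℂ) ^ 3 - 2 * ((Real.sin (c / 2) : ℝ) : ℂ) ^ 3 := by
  set a : ℂ := ((Real.cos (c / 2) : ℝ) : ℂ) with ha
  set b : ℂ := ((Real.sin (c / 2) : ℝ) : ℂ) with hb
  set x : ℂ := ((-(c / 2) : ℝ) : ℂ) * Complex.I with hx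
  set y : ℂ := (((c / 2) : ℝ) : ℂ) * Complex.I with hy
  have hex : Complex.exp x = a - b * Complex.I := by
    rw [hx, Complex.exp_mul_I, ← Complex.ofReal_cos, ← Complex.ofReal_sin, ha, hb]
    push_cast [Real.cos_neg, Real.sin_neg]
    ring
  have hey : Complex.exp y = a + b * Complex.I := by
    rw [hy, Complex.exp_mul_I, ← Complex.ofReal_cos, ← Complex.ofReal_sin, ha, hb]
  have hE1 : NormedSpace.exp ((c : ℂ) • τ 0)
      = !![a, -Complex.I * b; -Complex.I * b, a] := by
    have harg : (c : ℂ) • τ 0 = P1 * !![x, 0; 0, y] * Q1 := by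
      ext i j
      fin_cases i <;> fin_cases j <;>
        simp [τ, σ, P1, Q1, Matrix.mul_apply, Fin.sum_univ_succ, hx, hy] <;>
        push_cast <;> ring
    rw [harg, exp_two P1 Q1 P1Q1 Q1P1, hex, hey]
    ext i j
    fin_cases i <;> fin_cases j <;>
      simp [P1, Q1, Matrix.mul_apply, Fin.sum_univ_succ] <;> ring
  have hE2 : NormedSpace.exp ((c : ℂ) • τ 1) = !![a, -b; b, a] := by
    have harg : (c : ℂ) • τ 1 = P2 * !![x, 0; 0, y] * Q2 := by
      ext i j
      fin_cases i <;> fin_cases j <;>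
        simp [τ, σ, P2, Q2, Matrix.mul_apply, Fin.sum_univ_succ, hx, hy] <;>
        push_cast <;> linear_combination (norm := ring_nf) (0 : ℂ)
    rw [harg, exp_two P2 Q2 P2Q2 Q2P2, hex, hey]
    ext i j
    fin_cases i <;> fin_cases j
    · simp [P2, Q2, Matrix.mul_apply, Fin.sum_univ_succ]; ring
    · simp [P2, Q2, Matrix.mul_apply, Fin.sum_univ_succ]
      linear_combination b * Complex.I_sq
    · simp [P2, Q2, Matrix.mul_apply, Fin.sum_univ_succ]
      linear_combination (-b) * Complex.I_sq
    · simp [P2, Q2, Matrix.mul_apply, Fin.sum_univ_succ]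
      linear_combination (-a) * Complex.I_sq
  have hE3 : NormedSpace.exp ((c : ℂ) • τ 2)
      = !![a - b * Complex.I, 0; 0, a + b * Complex.I] := by
    have harg : (c : ℂ) • τ 2 = 1 * !![x, 0; 0, y] * 1 := by
      ext i j
      fin_cases i <;> fin_cases j <;>
        simp [τ, σ, hx, hy] <;> push_cast <;> ring
    rw [harg, exp_two 1 1 (one_mul 1) (one_mul 1), hex, hey, one_mul, Matrix.mul_one]
  rw [hE1, hE2, hE3]
  simp [Matrix.trace, Matrix.mul_apply, Fin.sum_univ_succ, Matrix.diag]
  linear_combination (2 * b ^ 3) * Complex.I_sq
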